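/- For the diagonal 2×2 operator matrix diag(T,T) on H ⊕ H, dw(diag(T,T)) ≤ √2·(w(T)² + ‖T‖⁴)^{1/2}. -/

import Mathlib

open scoped InnerProductSpace

variable {H : Type*} [NormedAddCommGroup H] [InnerProductSpace ℂ H] [CompleteSpace H]

noncomputable def numRadius {E : Type*} [NormedAddCommGroup E] [InnerProductSpace ℂ E]
    (S : E →L[ℂ] E) : ℝ :=
  ⨆ x : {x : E // ‖x‖ = 1}, ‖(⟪S x.1, x.1⟫_ℂ : ℂ)‖

noncomputable def dwRadius {E : Type*} [NormedAddCommGroup E] [InnerProductSpace ℂ E]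
    (S : E →L[ℂ] E) : ℝ :=
  ⨆ x : {x : E // ‖x‖ = 1}, Real.sqrt (‖(⟪S x.1, x.1⟫_ℂ : ℂ)‖ ^ 2 + ‖S x.1‖ ^ 4)

/-- The 2×2 block operator matrix `[[T₁₁, T₁₂], [T₂₁, T₂₂]]` on `H ⊕ H`. -/
noncomputable def blockOp2 (T₁₁ T₁₂ T₂₁ T₂₂ : H →L[ℂ] H) :
    WithLp 2 (H × H) →L[ℂ] WithLp 2 (H × H) :=
  ((WithLp.prodContinuousLinearEquiv 2 ℂ H H).symm : H × H →L[ℂ] WithLp 2 (H × H)) ∘L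
    ((T₁₁ ∘L ContinuousLinearMap.fst ℂ H H + T₁₂ ∘L ContinuousLinearMap.snd ℂ H H).prod
      (T₂₁ ∘L ContinuousLinearMap.fst ℂ H H + T₂₂ ∘L ContinuousLinearMap.snd ℂ H H)) ∘L
    ((WithLp.prodContinuousLinearEquiv 2 ℂ H H) : WithLp 2 (H × H) →L[ℂ] H × H)


section Aux

variable {E : Type*} [NormedAddCommGroup E] [InnerProductSpace ℂ E]

lemma numRadius_bddAbove (S : E →L[ℂ] E) :
    BddAbove (Set.range fun x : {x : E // ‖x‖ = 1} => ‖(⟪S x.1, x.1⟫_ℂ : ℂ)‖) := by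
  refine ⟨‖S‖, ?_⟩
  rintro _ ⟨x, rfl⟩
  calc ‖(⟪S x.1, x.1⟫_ℂ : ℂ)‖ ≤ ‖S x.1‖ * ‖x.1‖ := norm_inner_le_norm _ _
    _ ≤ (‖S‖ * ‖x.1‖) * ‖x.1‖ := by
        gcongr; exact S.le_opNorm _
    _ = ‖S‖ := by rw [x.2]; ring

lemma inner_le_numRadius (S : E →L[ℂ] E) (x : E) :
    ‖(⟪S x, x⟫_ℂ : ℂ)‖ ≤ numRadius S * ‖x‖ ^ 2 := by
  rcases eq_or_ne x 0 with rfl | hx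
  · simp [numRadius]
  · have hxn : (0:ℝ) < ‖x‖ := norm_pos_iff.mpr hx
    set u : E := ((‖x‖ : ℂ))⁻¹ • x with hu_def
    have hu : ‖u‖ = 1 := by
      rw [hu_def, norm_smul, norm_inv]
      simp [hxn.ne']
    have hval : ‖(⟪S u, u⟫_ℂ : ℂ)‖ = ‖x‖⁻¹ * (‖x‖⁻¹ * ‖(⟪S x, x⟫_ℂ : ℂ)‖) := by
      rw [hu_def, map_smul, inner_smul_left, inner_smul_right]
      simp [norm_mul, abs_of_nonneg hxn.le, mul_assoc]
    have hle : ‖(⟪S u, u⟫_ℂ : ℂ)‖ ≤ numRadius S :=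
      le_ciSup (numRadius_bddAbove S) (⟨u, hu⟩ : {x : E // ‖x‖ = 1})
    rw [hval] at hle
    have h2 : (‖x‖⁻¹ * (‖x‖⁻¹ * ‖(⟪S x, x⟫_ℂ : ℂ)‖)) * ‖x‖ ^ 2 = ‖(⟪S x, x⟫_ℂ : ℂ)‖ := by
      rw [sq]; field_simp
    have h3 := mul_le_mul_of_nonneg_right hle (sq_nonneg ‖x‖)
    rwa [h2] at h3

end Aux

lemma blockOp2_fst (T : H →L[ℂ] H) (x : WithLp 2 (H × H)) :
    (blockOp2 T 0 0 T x).fst = T x.fst := by simp [blockOp2]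

lemma blockOp2_snd (T : H →L[ℂ] H) (x : WithLp 2 (H × H)) :
    (blockOp2 T 0 0 T x).snd = T x.snd := by simp [blockOp2]

theorem dw_blockDiag_same_le (T : H →L[ℂ] H) :
    dwRadius (blockOp2 T 0 0 T) ≤ Real.sqrt 2 * (numRadius T ^ 2 + ‖T‖ ^ 4) ^ ((1 : ℝ) / 2) := by
  set S := blockOp2 T 0 0 T with hS
  have hnr : 0 ≤ numRadius T := Real.iSup_nonneg fun x => norm_nonneg _
  have hcnn : (0:ℝ) ≤ numRadius T ^ 2 + ‖T‖ ^ 4 := by positivity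
  have hrhs : (0:ℝ) ≤ Real.sqrt 2 * (numRadius T ^ 2 + ‖T‖ ^ 4) ^ ((1 : ℝ) / 2) := by positivity
  refine Real.iSup_le (fun x => ?_) hrhs
  obtain ⟨x, hx⟩ := x
  have h1 : ‖x.fst‖ ^ 2 + ‖x.snd‖ ^ 2 = 1 := by
    rw [← WithLp.prod_norm_sq_eq_of_L2, hx]; norm_num
  have hA : ‖(⟪S x, x⟫_ℂ : ℂ)‖ ≤ numRadius T := by
    calc ‖(⟪S x, x⟫_ℂ : ℂ)‖
        = ‖(⟪T x.fst, x.fst⟫_ℂ : ℂ) + (⟪T x.snd, x.snd⟫_ℂ : ℂ)‖ := by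
          rw [WithLp.prod_inner_apply]
          change ‖⟪(S x).fst, x.fst⟫_ℂ + ⟪(S x).snd, x.snd⟫_ℂ‖ = _
          rw [blockOp2_fst, blockOp2_snd]
      _ ≤ ‖(⟪T x.fst, x.fst⟫_ℂ : ℂ)‖ + ‖(⟪T x.snd, x.snd⟫_ℂ : ℂ)‖ := norm_add_le _ _
      _ ≤ numRadius T * ‖x.fst‖ ^ 2 + numRadius T * ‖x.snd‖ ^ 2 :=
          add_le_add (inner_le_numRadius T _) (inner_le_numRadius T _)
      _ = numRadius T * (‖x.fst‖ ^ 2 + ‖x.snd‖ ^ 2) := by ring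
      _ = numRadius T := by rw [h1, mul_one]
  have hB : ‖S x‖ ^ 2 ≤ ‖T‖ ^ 2 := by
    calc ‖S x‖ ^ 2 = ‖(S x).fst‖ ^ 2 + ‖(S x).snd‖ ^ 2 := WithLp.prod_norm_sq_eq_of_L2 _
      _ = ‖T x.fst‖ ^ 2 + ‖T x.snd‖ ^ 2 := by rw [blockOp2_fst, blockOp2_snd]
      _ ≤ (‖T‖ * ‖x.fst‖) ^ 2 + (‖T‖ * ‖x.snd‖) ^ 2 := by
          gcongr <;> exact T.le_opNorm _
      _ = ‖T‖ ^ 2 * (‖x.fst‖ ^ 2 + ‖x.snd‖ ^ 2) := by ring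
      _ = ‖T‖ ^ 2 := by rw [h1, mul_one]
  have hB4 : ‖S x‖ ^ 4 ≤ ‖T‖ ^ 4 := by
    calc ‖S x‖ ^ 4 = (‖S x‖ ^ 2) ^ 2 := by ring
      _ ≤ (‖T‖ ^ 2) ^ 2 := by gcongr
      _ = ‖T‖ ^ 4 := by ring
  have hA2 : ‖(⟪S x, x⟫_ℂ : ℂ)‖ ^ 2 ≤ numRadius T ^ 2 := by gcongr
  calc Real.sqrt (‖(⟪S x, x⟫_ℂ : ℂ)‖ ^ 2 + ‖S x‖ ^ 4)
      ≤ Real.sqrt (numRadius T ^ 2 + ‖T‖ ^ 4) :=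
        Real.sqrt_le_sqrt (add_le_add hA2 hB4)
    _ = (numRadius T ^ 2 + ‖T‖ ^ 4) ^ ((1 : ℝ) / 2) := Real.sqrt_eq_rpow _
    _ ≤ Real.sqrt 2 * (numRadius T ^ 2 + ‖T‖ ^ 4) ^ ((1 : ℝ) / 2) := by
        have h2 : (1:ℝ) ≤ Real.sqrt 2 := by
          rw [show (1:ℝ) = Real.sqrt 1 from (Real.sqrt_one).symm]
          exact Real.sqrt_le_sqrt (by norm_num)
        nlinarith [Real.rpow_nonneg hcnn ((1:ℝ)/2)]
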